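/- Assume f satisfies hypotheses (H1)–(H3) with b = 1 and a < 0, and let x be a solution of x'(t) = f(t,x_t) on [α−1,∞) with m = liminf_{t→∞} x(t) < 0 < M = limsup_{t→∞} x(t). Then m ≥ D(M) and m ≥ r(−r(M)/2), where r(x) = ax/(1+x) and D is defined from A(x) = x + r(x) + (1/r(x))∫_x^0 r(t)dt and B(x) = (1/r(x))∫_{−r(x)}^0 r(s)ds by D(x) = A(x) if r(x) < −x and D(x) = B(x) if r(x) ≥ −x. -/

import Mathlib

open Set Filter MeasureTheory Topology
open intervalIntegral

/-- The Yorke functional 𝓜(φ) = max{0, max_{s ∈ [-1,0]} φ(s)}. -/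
noncomputable def yorkeM (φ : ℝ → ℝ) : ℝ := max 0 (sSup (φ '' Icc (-1 : ℝ) 0))

/-- Membership in the phase space C = C([-1,0], ℝ): we work with functions
ℝ → ℝ whose restriction to [-1,0] is continuous (only values on [-1,0] matter). -/
def InC (φ : ℝ → ℝ) : Prop := ContinuousOn φ (Icc (-1 : ℝ) 0)

/-- The segment x_t(s) = x(t+s), s ∈ [-1,0]. -/
def seg (x : ℝ → ℝ) (t : ℝ) : ℝ → ℝ := fun s => x (t + s)

/-- Carathéodory condition: measurable in t for fixed φ, continuous in φ
(w.r.t. uniform distance on [-1,0]) for fixed t, locally dominated by an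
integrable function. -/
def Caratheodory (f : ℝ → (ℝ → ℝ) → ℝ) : Prop :=
  (∀ φ, InC φ → Measurable fun t => f t φ) ∧
  (∀ t : ℝ, ∀ φ, InC φ → ∀ ε : ℝ, 0 < ε → ∃ δ : ℝ, 0 < δ ∧ ∀ ψ, InC ψ →
      (∀ s ∈ Icc (-1 : ℝ) 0, |ψ s - φ s| ≤ δ) → |f t ψ - f t φ| ≤ ε) ∧
  (∀ t : ℝ, ∀ φ, InC φ → ∃ δ : ℝ, 0 < δ ∧ ∃ m : ℝ → ℝ,
      IntegrableOn m (Icc (t - δ) (t + δ)) ∧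
      ∀ s ∈ Icc (t - δ) (t + δ), ∀ ψ, InC ψ →
        (∀ u ∈ Icc (-1 : ℝ) 0, |ψ u - φ u| ≤ δ) → |f s ψ| ≤ m s)

/-- (H1): f is Carathéodory and for every q there is ϑ(q) ≥ 0 dominating f(t,φ)
a.e. in t whenever φ ≥ q on [-1,0]. -/
def HypH1 (f : ℝ → (ℝ → ℝ) → ℝ) (θ : ℝ → ℝ) : Prop :=
  Caratheodory f ∧
  ∀ q : ℝ, 0 ≤ θ q ∧
    ∀ φ, InC φ → (∀ s ∈ Icc (-1 : ℝ) 0, q ≤ φ s) →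
      ∀ᵐ t : ℝ ∂volume, f t φ ≤ θ q

/-- (H2), the generalized Yorke condition with r(x) = ax/(1+bx):
r(𝓜(φ)) ≤ f(t,φ) for all φ, and f(t,φ) ≤ r(-𝓜(-φ)) for all φ with
min φ > -1/b (which is automatic when b = 0, since then b·φ(s) > -1 always). -/
def HypH2 (f : ℝ → (ℝ → ℝ) → ℝ) (a b : ℝ) : Prop :=
  (∀ t : ℝ, ∀ φ, InC φ → a * yorkeM φ / (1 + b * yorkeM φ) ≤ f t φ) ∧
  (∀ t : ℝ, ∀ φ, InC φ → (∀ s ∈ Icc (-1 : ℝ) 0, -1 < b * φ s) →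
      f t φ ≤ a * (-yorkeM fun s => -φ s) / (1 + b * (-yorkeM fun s => -φ s)))

/-- (H3): ∫₀^∞ f(s, p_s) ds diverges for every continuous p having a nonzero
limit at infinity. -/
def HypH3 (f : ℝ → (ℝ → ℝ) → ℝ) : Prop :=
  ∀ p : ℝ → ℝ, ContinuousOn p (Ici (-1 : ℝ)) → ∀ L : ℝ, L ≠ 0 →
    Tendsto p atTop (𝓝 L) →
    ¬∃ I : ℝ, Tendsto (fun T => ∫ s in (0 : ℝ)..T, f s (seg p s)) atTop (𝓝 I)

/-- A solution of x'(t) = f(t, x_t) on [α-1, ω) (with ω ∈ (α, +∞]) with initial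
time α: continuous on [α-1, ω) and satisfying the equivalent integral equation
(absolute continuity plus a.e. differential equation) on [α, ω). -/
def IsSolOn (f : ℝ → (ℝ → ℝ) → ℝ) (α : ℝ) (ω : EReal) (x : ℝ → ℝ) : Prop :=
  (α : EReal) < ω ∧
  ContinuousOn x {t : ℝ | α - 1 ≤ t ∧ (t : EReal) < ω} ∧
  ∀ t : ℝ, α ≤ t → (t : EReal) < ω →
    IntervalIntegrable (fun s => f s (seg x s)) volume α t ∧
    x t = x α + ∫ s in α..t, f s (seg x s)

/-- A solution on its maximal interval of existence [α-1, ω): it admits no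
extension to any strictly larger interval [α-1, ω'). -/
def IsMaximalSolOn (f : ℝ → (ℝ → ℝ) → ℝ) (α : ℝ) (ω : EReal) (x : ℝ → ℝ) : Prop :=
  IsSolOn f α ω x ∧
  ∀ ω' : EReal, ω < ω' → ∀ y : ℝ → ℝ, IsSolOn f α ω' y →
    ¬∀ t : ℝ, α - 1 ≤ t → (t : EReal) < ω → y t = x t

/-- A (global) solution of x'(t) = f(t, x_t) on [α-1, +∞). -/
def IsGlobalSol (f : ℝ → (ℝ → ℝ) → ℝ) (α : ℝ) (x : ℝ → ℝ) : Prop :=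
  ContinuousOn x (Ici (α - 1)) ∧
  ∀ t : ℝ, α ≤ t →
    IntervalIntegrable (fun s => f s (seg x s)) volume α t ∧
    x t = x α + ∫ s in α..t, f s (seg x s)

/-- Lemma 2.5: under (H1)-(H3) with b = 1, for a solution with
m = liminf x < 0 < M = limsup x, one has m ≥ D(M) and m ≥ r(-r(M)/2). -/
noncomputable def rA (a y : ℝ) : ℝ := a * y / (1 + y)
noncomputable def ccA (a K : ℝ) : ℝ := -(a * K / (1 + K))
noncomputable def muA (a K : ℝ) : ℝ := min K (ccA a K)
noncomputable def psiA (a y : ℝ) : ℝ := a * (y - Real.log (1 + y))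
noncomputable def PhiA (a K : ℝ) : ℝ :=
  psiA a (muA a K) / ccA a K + (1 - muA a K / ccA a K) * rA a (muA a K)

lemma rA_anti' (a : ℝ) (ha : a < 0) {y1 y2 : ℝ} (h1 : 0 ≤ y1) (h2 : y1 ≤ y2) :
    rA a y2 ≤ rA a y1 := by
  unfold rA
  rw [div_le_div_iff₀ (by linarith) (by linarith)]
  nlinarith

lemma rA_nonpos' (a : ℝ) (ha : a < 0) {y : ℝ} (hy : 0 ≤ y) : rA a y ≤ 0 := by
  have := rA_anti' a ha (le_refl 0) hy
  simpa [rA] using this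

lemma ccA_pos' (a : ℝ) (ha : a < 0) {K : ℝ} (hK : 0 < K) : 0 < ccA a K := by
  unfold ccA
  have : a * K / (1 + K) < 0 := div_neg_of_neg_of_pos (mul_neg_of_neg_of_pos ha hK) (by linarith)
  linarith

lemma key_bound
    (f : ℝ → (ℝ → ℝ) → ℝ) (a : ℝ) (ha : a < 0)
    (h2 : HypH2 f a 1) (α : ℝ) (x : ℝ → ℝ) (hx : IsGlobalSol f α x)
    (hxbdd₁ : IsBoundedUnder (· ≤ ·) atTop x)
    (hxbdd₂ : IsBoundedUnder (· ≥ ·) atTop x)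
    (m M : ℝ) (hm : m = liminf x atTop) (hM : M = limsup x atTop)
    (hm0 : m < 0) (hM0 : 0 < M) (K : ℝ) (hK : M < K) :
    (∫ v in (0:ℝ)..1, rA a (min K (ccA a K * v))) ≤ m := by
  have hK0 : 0 < K := hM0.trans hK
  set C := ccA a K with hCdef
  have hC : 0 < C := ccA_pos' a ha hK0
  set F := fun s => f s (seg x s) with hF
  have hxc : ContinuousOn x (Ici (α - 1)) := hx.1
  have hInC : ∀ s : ℝ, α ≤ s → InC (seg x s) := by
    intro s hs
    unfold InC seg
    apply hxc.comp (Continuous.continuousOn (by continuity))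
    intro u hu
    simp only [mem_Ici]
    have := hu.1
    simp only [mem_Icc] at hu
    linarith [hu.1]
  have hyn : ∀ φ : ℝ → ℝ, 0 ≤ yorkeM φ := fun φ => le_max_left _ _
  have hMlb : ∀ s : ℝ, α ≤ s → rA a (yorkeM (seg x s)) ≤ F s := by
    intro s hs
    have := h2.1 s (seg x s) (hInC s hs)
    simpa [rA, one_mul] using this
  have hyorke_le : ∀ s c : ℝ, 0 ≤ c → (∀ w ∈ Icc (s-1) s, x w ≤ c) →
      yorkeM (seg x s) ≤ c := by
    intro s c hc hw
    apply max_le hc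
    apply Real.sSup_le _ hc
    rintro y ⟨u, hu, rfl⟩
    simp only [mem_Icc] at hu
    exact hw (s + u) ⟨by linarith [hu.1], by linarith [hu.2]⟩
  have hF_lb : ∀ s c : ℝ, α ≤ s → 0 ≤ c → (∀ w ∈ Icc (s-1) s, x w ≤ c) →
      rA a c ≤ F s := fun s c hs hc hw =>
    le_trans (rA_anti' a ha (hyn _) (hyorke_le s c hc hw)) (hMlb s hs)
  have hIntSub : ∀ s t : ℝ, α ≤ s → s ≤ t → IntervalIntegrable F volume s t := by
    intro s t hs hst
    exact ((hx.2 t (hs.trans hst)).1).mono_set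
      (uIcc_subset_uIcc (by rw [uIcc_of_le (hs.trans hst)]; exact ⟨hs, hst⟩)
        (by rw [uIcc_of_le (hs.trans hst)]; exact ⟨hs.trans hst, le_refl t⟩))
  have hIntEq : ∀ s t : ℝ, α ≤ s → s ≤ t → x t - x s = ∫ u in s..t, F u := by
    intro s t hs hst
    have h1 := (hx.2 s hs).2
    have h2' := (hx.2 t (hs.trans hst)).2
    have hadd := integral_add_adjacent_intervals
      (hIntSub α s (le_refl α) hs) (hIntSub s t hs hst)
    rw [h1, h2']
    linarith [hadd]
  have hlimsup : limsup x atTop < K := by rw [← hM]; exact hK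
  have hev : ∀ᶠ t in atTop, x t < K := eventually_lt_of_limsup_lt hlimsup hxbdd₁
  obtain ⟨T₀', hT₀'⟩ := eventually_atTop.mp hev
  set T₀ := max T₀' (α + 1) with hT₀def
  have hT₀K : ∀ t, T₀ ≤ t → x t < K := fun t ht => hT₀' t (le_trans (le_max_left _ _) ht)
  have hT₀α : α + 1 ≤ T₀ := le_max_right _ _
  have hrAK : rA a K = -C := by rw [hCdef]; unfold rA ccA; ring
  have hslope : ∀ w t : ℝ, T₀ + 1 ≤ w → w ≤ t → x w ≤ x t + C * (t - w) := by
    intro w t hw hwt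
    have hαw : α ≤ w := by linarith
    have heq := hIntEq w t hαw hwt
    have hmono : ((t - w) • (-C) : ℝ) ≤ ∫ u in w..t, F u := by
      rw [← intervalIntegral.integral_const]
      apply integral_mono_on hwt intervalIntegrable_const (hIntSub w t hαw hwt)
      intro s hs
      rw [← hrAK]
      apply hF_lb s K (by linarith [hs.1]) hK0.le
      intro w' hw'
      simp only [mem_Icc] at hw'
      exact (hT₀K w' (by linarith [hw'.1, hs.1])).le
    rw [smul_eq_mul] at hmono
    nlinarith [heq, hmono]
  have hfreq : ∃ᶠ t in atTop, 0 < x t :=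
    frequently_lt_of_lt_limsup hxbdd₂.isCoboundedUnder_le (by rw [← hM]; exact hM0)
  obtain ⟨u₀, hu₀ge, hu₀pos⟩ := (frequently_atTop.mp hfreq) (T₀ + 2)
  -- reduce to : ∀ δ > 0, bound ≤ m + δ
  apply le_of_forall_gt_imp_ge_of_dense
  intro c hc
  set δ := c - m with hδdef
  have hδ : 0 < δ := by rw [hδdef]; linarith
  suffices hsuff : (∫ v in (0:ℝ)..1, rA a (min K (ccA a K * v))) ≤ m + δ by
    rw [hδdef] at hsuff; linarith
  -- choose t₁
  set b := m + min δ (-m/2) with hbdef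
  have hbm : m < b := by
    have : 0 < min δ (-m/2) := lt_min hδ (by linarith)
    rw [hbdef]; linarith
  have hbneg : b < 0 := by
    have : min δ (-m/2) ≤ -m/2 := min_le_right _ _
    rw [hbdef]; linarith
  have hbδ : b ≤ m + δ := by
    have : min δ (-m/2) ≤ δ := min_le_left _ _
    rw [hbdef]; linarith
  have hfreq2 : ∃ᶠ t in atTop, x t < b :=
    frequently_lt_of_liminf_lt hxbdd₁.isCoboundedUnder_ge (by rw [← hm]; exact hbm)
  obtain ⟨t₁, ht₁ge, ht₁lt⟩ := (frequently_atTop.mp hfreq2) u₀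
  have ht₁neg : x t₁ < 0 := ht₁lt.trans hbneg
  -- the last zero before t₁
  have hu₀α : α - 1 ≤ u₀ := by linarith
  have hcont' : ContinuousOn x (Icc u₀ t₁) := by
    apply hxc.mono
    intro s hs
    simp only [mem_Icc] at hs
    simp only [mem_Ici]
    linarith [hs.1]
  set S := Icc u₀ t₁ ∩ x ⁻¹' {0} with hSdef
  have hSne : S.Nonempty := by
    have h0mem : (0:ℝ) ∈ Icc (x t₁) (x u₀) := ⟨ht₁neg.le, hu₀pos.le⟩
    obtain ⟨z', hz'1, hz'2⟩ := intermediate_value_Icc' ht₁ge hcont' h0mem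
    exact ⟨z', hz'1, by simpa using hz'2⟩
  have hSclosed : IsClosed S :=
    hcont'.preimage_isClosed_of_isClosed isClosed_Icc isClosed_singleton
  have hScompact : IsCompact S :=
    isCompact_Icc.of_isClosed_subset hSclosed inter_subset_left
  have hSbdd : BddAbove S := ⟨t₁, fun s hs => hs.1.2⟩
  set z := sSup S with hzdef
  have hzS : z ∈ S := hScompact.sSup_mem hSne
  have hxz : x z = 0 := by simpa using hzS.2
  have hzu₀ : u₀ ≤ z := hzS.1.1
  have hzt₁ : z ≤ t₁ := hzS.1.2
  have hzneg : ∀ s, z < s → s ≤ t₁ → x s < 0 := by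
    intro s hzs hst₁
    by_contra hpos
    push_neg at hpos
    rcases eq_or_lt_of_le hpos with heq | hlt
    · have hsS : s ∈ S := ⟨⟨le_trans hzu₀ hzs.le, hst₁⟩, by simp [← heq]⟩
      exact absurd (le_csSup hSbdd hsS) (not_le.mpr hzs)
    · have h0mem : (0:ℝ) ∈ Icc (x t₁) (x s) := ⟨ht₁neg.le, hlt.le⟩
      obtain ⟨w, hw1, hw2⟩ := intermediate_value_Icc' hst₁
        (hcont'.mono (Icc_subset_Icc (le_trans hzu₀ hzs.le) (le_refl t₁))) h0mem
      have hwS : w ∈ S := ⟨⟨le_trans (le_trans hzu₀ hzs.le) hw1.1, hw1.2⟩, by simpa using hw2⟩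
      have := le_csSup hSbdd hwS
      linarith [hw1.1]
  set t₂ := min t₁ (z + 1) with ht₂def
  have hzt₂ : z ≤ t₂ := le_min hzt₁ (by linarith)
  have ht₂z1 : t₂ ≤ z + 1 := min_le_right _ _
  have ht₂t₁ : t₂ ≤ t₁ := min_le_left _ _
  have hzT : T₀ + 2 ≤ z := le_trans hu₀ge hzu₀
  have hαz : α ≤ z := by linarith
  set G := fun s => rA a (min K (C * (z + 1 - s))) with hGdef
  have hwin : ∀ s, z ≤ s → s ≤ t₂ → yorkeM (seg x s) ≤ min K (C * (z + 1 - s)) := by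
    intro s hs1 hs2
    apply hyorke_le
    · exact le_min hK0.le (mul_nonneg hC.le (by linarith [ht₂z1]))
    · intro w hw
      simp only [mem_Icc] at hw
      rcases le_or_gt w z with hwz | hwz
      · have hwT : T₀ + 1 ≤ w := by linarith [hw.1]
        have hsl := hslope w z hwT hwz
        rw [hxz] at hsl
        apply le_min
        · exact (hT₀K w (by linarith)).le
        · have h1 : C * (z - w) ≤ C * (z + 1 - s) := by
            apply mul_le_mul_of_nonneg_left _ hC.le
            linarith [hw.1]
          linarith
      · have := hzneg w hwz (le_trans hw.2 (hs2.trans ht₂t₁))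
        have h0 : (0:ℝ) ≤ min K (C * (z + 1 - s)) :=
          le_min hK0.le (mul_nonneg hC.le (by linarith [ht₂z1]))
        linarith
  have hGcont : ContinuousOn G (Icc z (z+1)) := by
    have hgm : Continuous (fun v : ℝ => min K (C * v)) :=
      continuous_const.min (continuous_const.mul continuous_id)
    intro s hs
    simp only [mem_Icc] at hs
    have hv0 : (0:ℝ) ≤ z + 1 - s := by linarith [hs.2]
    have h1 : (0:ℝ) ≤ min K (C * (z + 1 - s)) := le_min hK0.le (mul_nonneg hC.le hv0)
    apply ContinuousAt.continuousWithinAt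
    have hinner : ContinuousAt (fun s : ℝ => min K (C * (z + 1 - s))) s :=
      (continuous_const.min (continuous_const.mul
        ((continuous_const.sub continuous_id)))).continuousAt
    show ContinuousAt (fun s : ℝ => rA a (min K (C * (z + 1 - s)))) s
    unfold rA
    exact (continuousAt_const.mul hinner).div (continuousAt_const.add hinner)
      (by intro h; linarith)
  have hxt₁ : x t₁ = ∫ u in z..t₁, F u := by
    have := hIntEq z t₁ hαz hzt₁
    rw [hxz] at this
    linarith
  have hsplit : (∫ u in z..t₁, F u) = (∫ u in z..t₂, F u) + ∫ u in t₂..t₁, F u :=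
    (integral_add_adjacent_intervals (hIntSub z t₂ hαz hzt₂)
      (hIntSub t₂ t₁ (by linarith) ht₂t₁)).symm
  have htail : 0 ≤ ∫ u in t₂..t₁, F u := by
    by_cases hcase : t₁ ≤ z + 1
    · rw [show t₂ = t₁ from min_eq_left hcase, integral_same]
    · push_neg at hcase
      have ht₂eq : t₂ = z + 1 := min_eq_right hcase.le
      apply integral_nonneg ht₂t₁
      intro s hs
      simp only [mem_Icc, ht₂eq] at hs
      have h𝓜 : yorkeM (seg x s) ≤ 0 := by
        apply hyorke_le s 0 (le_refl 0)
        intro w hw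
        simp only [mem_Icc] at hw
        rcases eq_or_lt_of_le (show z ≤ w by linarith [hw.1, hs.1]) with heq | hlt
        · rw [← heq, hxz]
        · exact (hzneg w hlt (le_trans hw.2 hs.2)).le
      have h0 : yorkeM (seg x s) = 0 := le_antisymm h𝓜 (hyn _)
      have := hMlb s (by linarith [hs.1])
      rw [h0] at this
      simpa [rA] using this
  have hGint1 : IntervalIntegrable G volume z t₂ :=
    (hGcont.mono (by rw [uIcc_of_le hzt₂]; exact Icc_subset_Icc (le_refl z) ht₂z1)).intervalIntegrable
  have hGint2 : IntervalIntegrable G volume t₂ (z+1) :=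
    (hGcont.mono (by rw [uIcc_of_le ht₂z1]; exact Icc_subset_Icc hzt₂ (le_refl _))).intervalIntegrable
  have hmid1 : (∫ u in z..t₂, G u) ≤ ∫ u in z..t₂, F u := by
    apply integral_mono_on hzt₂ hGint1 (hIntSub z t₂ hαz hzt₂)
    intro s hs
    simp only [mem_Icc] at hs
    exact le_trans (rA_anti' a ha (hyn (seg x s)) (hwin s hs.1 hs.2))
      (hMlb s (by linarith [hs.1]))
  have hmid2 : (∫ u in t₂..z+1, G u) ≤ 0 := by
    have h0 : (∫ u in t₂..z+1, (0:ℝ)) = 0 := by simp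
    rw [← h0]
    apply integral_mono_on ht₂z1 hGint2 intervalIntegrable_const
    intro s hs
    simp only [mem_Icc] at hs
    exact rA_nonpos' a ha (le_min hK0.le (mul_nonneg hC.le (by linarith [hs.2])))
  have hmid3 : (∫ u in z..z+1, G u) = (∫ u in z..t₂, G u) + ∫ u in t₂..z+1, G u :=
    (integral_add_adjacent_intervals hGint1 hGint2).symm
  have hGval : (∫ u in z..z+1, G u) = ∫ v in (0:ℝ)..1, rA a (min K (C * v)) := by
    have h := intervalIntegral.integral_comp_sub_left (a := z) (b := z+1)
      (fun v => rA a (min K (C * v))) (z+1)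
    rw [show z+1-(z+1) = (0:ℝ) by ring, show z+1-z = (1:ℝ) by ring] at h
    exact h
  have hfinal : (∫ v in (0:ℝ)..1, rA a (min K (C * v))) ≤ x t₁ := by
    rw [hxt₁, hsplit]
    have := hmid3
    linarith [hmid1, hmid2, htail, hGval]
  calc (∫ v in (0:ℝ)..1, rA a (min K (ccA a K * v))) ≤ x t₁ := hfinal
  _ ≤ m + δ := le_trans ht₁lt.le hbδ

lemma cont_min (a K C : ℝ) (hK : 0 < K) (hC : 0 < C) {s : Set ℝ} (hs : s ⊆ Ici 0) :
    ContinuousOn (fun v => rA a (min K (C * v))) s := by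
  intro v hv
  have hv0 : (0:ℝ) ≤ v := hs hv
  have hg : Continuous (fun v : ℝ => min K (C * v)) :=
    continuous_const.min (continuous_const.mul continuous_id)
  have h1 : (0:ℝ) ≤ min K (C * v) := le_min hK.le (by positivity)
  apply ContinuousAt.continuousWithinAt
  unfold rA
  exact (continuousAt_const.mul hg.continuousAt).div
    (continuousAt_const.add hg.continuousAt) (by intro h; linarith)

/-- FTC : ∫_0^w a (C v)/(1+C v) dv = psiA a (C w) / C for C > 0, 0 ≤ w. -/
lemma integral_rA_comp (a C w : ℝ) (hC : 0 < C) (hw : 0 ≤ w) :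
    ∫ v in (0:ℝ)..w, rA a (C * v) = psiA a (C * w) / C := by
  have key : ∀ v ∈ uIcc (0:ℝ) w,
      HasDerivAt (fun u => a * (C * u - Real.log (1 + C * u)) / C) (rA a (C * v)) v := by
    intro v hv
    rw [uIcc_of_le hw] at hv
    have hpos : 0 < 1 + C * v := by nlinarith [hv.1]
    have hlog : HasDerivAt (fun u : ℝ => Real.log (1 + C * u)) (C / (1 + C * v)) v := by
      have h1 : HasDerivAt (fun u : ℝ => 1 + C * u) C v := by
        simpa using ((hasDerivAt_id v).const_mul C).const_add 1
      have := (Real.hasDerivAt_log (ne_of_gt hpos)).comp v h1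
      simpa [one_div, div_eq_inv_mul, Function.comp_def] using this
    have h2 : HasDerivAt (fun u : ℝ => C * u) C v := by
      simpa using (hasDerivAt_id v).const_mul C
    have h3 : HasDerivAt (fun u : ℝ => C * u - Real.log (1 + C * u))
        (C - C / (1 + C * v)) v := h2.sub hlog
    have h4 := (h3.const_mul a).div_const C
    refine h4.congr_deriv ?_
    unfold rA
    field_simp
    ring
  have hint : IntervalIntegrable (fun v => rA a (C * v)) volume 0 w := by
    apply ContinuousOn.intervalIntegrable
    intro v hv
    rw [uIcc_of_le hw] at hv
    have hpos : 0 < 1 + C * v := by nlinarith [hv.1]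
    unfold rA
    exact ((continuousAt_const.mul (continuousAt_const.mul continuousAt_id)).div
      (continuousAt_const.add (continuousAt_const.mul continuousAt_id)) (ne_of_gt hpos)).continuousWithinAt
  have := integral_eq_sub_of_hasDerivAt key hint
  rw [this]
  unfold psiA
  simp

lemma log_lower (C : ℝ) (hC : 0 ≤ C) : 2 * C / (2 + C) ≤ Real.log (1 + C) := by
  set M := C / 2 with hM
  have hM0 : 0 ≤ M := by positivity
  have hMpos : 0 < 1 + M := by linarith
  -- log(1+C) = ∫_0^C 1/(1+t)
  have hlog : (∫ t in (0:ℝ)..C, 1 / (1 + t)) = Real.log (1 + C) := by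
    have key : ∀ t ∈ uIcc (0:ℝ) C, HasDerivAt (fun u => Real.log (1 + u)) (1 / (1 + t)) t := by
      intro t ht
      rw [uIcc_of_le hC] at ht
      have hpos : 0 < 1 + t := by linarith [ht.1]
      have h1 : HasDerivAt (fun u : ℝ => 1 + u) 1 t := by simpa using (hasDerivAt_id t).const_add 1
      simpa [one_div, Function.comp_def] using (Real.hasDerivAt_log (ne_of_gt hpos)).comp t h1
    have hint : IntervalIntegrable (fun t => 1 / (1 + t)) volume 0 C := by
      apply ContinuousOn.intervalIntegrable
      intro t ht
      rw [uIcc_of_le hC] at ht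
      have hpos : 0 < 1 + t := by linarith [ht.1]
      exact (continuousAt_const.div (continuousAt_const.add continuousAt_id)
        (ne_of_gt hpos)).continuousWithinAt
    rw [integral_eq_sub_of_hasDerivAt key hint]
    simp
  -- tangent-line lower bound for 1/(1+t) at t = M
  have hpt : ∀ t ∈ Icc (0:ℝ) C,
      1 / (1 + M) - (t - M) / (1 + M) ^ 2 ≤ 1 / (1 + t) := by
    intro t ht
    have hpos : 0 < 1 + t := by linarith [ht.1]
    rw [div_sub_div _ _ (ne_of_gt hMpos) (by positivity), div_le_div_iff₀ (by positivity) hpos]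
    nlinarith [sq_nonneg (t - M)]
  have hlin : (∫ t in (0:ℝ)..C, (1 / (1 + M) - (t - M) / (1 + M) ^ 2))
      = C / (1 + M) := by
    have key : ∀ t ∈ uIcc (0:ℝ) C,
        HasDerivAt (fun u : ℝ => u / (1 + M) - (u - M) ^ 2 / (2 * (1 + M) ^ 2))
          (1 / (1 + M) - (t - M) / (1 + M) ^ 2) t := by
      intro t _
      have h1 : HasDerivAt (fun u : ℝ => u / (1 + M)) (1 / (1 + M)) t := by
        simpa [div_eq_mul_inv] using (hasDerivAt_id t).mul_const (1 + M)⁻¹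
      have h2 : HasDerivAt (fun u : ℝ => (u - M) ^ 2) (2 * (t - M)) t := by
        exact (((hasDerivAt_id t).sub_const M).pow 2).congr_deriv (by simp)
      have h3 := h1.sub (h2.div_const (2 * (1 + M) ^ 2))
      refine h3.congr_deriv ?_
      field_simp
    have hint : IntervalIntegrable (fun t : ℝ => 1 / (1 + M) - (t - M) / (1 + M) ^ 2) volume 0 C := by
      apply ContinuousOn.intervalIntegrable
      fun_prop (disch := positivity)
    rw [integral_eq_sub_of_hasDerivAt key hint]
    field_simp
    ring
  have hmono : C / (1 + M) ≤ Real.log (1 + C) := by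
    rw [← hlog, ← hlin]
    apply intervalIntegral.integral_mono_on hC _ _ hpt
    · apply ContinuousOn.intervalIntegrable
      fun_prop (disch := positivity)
    · apply ContinuousOn.intervalIntegrable
      intro t ht
      rw [uIcc_of_le hC] at ht
      have hpos : 0 < 1 + t := by linarith [ht.1]
      exact (continuousAt_const.div (continuousAt_const.add continuousAt_id)
        (ne_of_gt hpos)).continuousWithinAt
  have : 2 * C / (2 + C) = C / (1 + M) := by
    rw [hM]; field_simp
  linarith [hmono]

lemma psi_div_ge' (a C : ℝ) (ha : a < 0) (hC : 0 < C) :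
    a * (C / 2) / (1 + C / 2) ≤ a * (C - Real.log (1 + C)) / C := by
  have hlog := log_lower C hC.le
  have h1 : a * (C / 2) / (1 + C / 2) = a * (C / (2 + C)) := by
    field_simp
  have h2 : a * (C - Real.log (1 + C)) / C = a * ((C - Real.log (1 + C)) / C) := by ring
  rw [h1, h2]
  apply mul_le_mul_of_nonpos_left _ ha.le
  rw [div_le_div_iff₀ hC (by linarith)]
  have h3 : 2 * C ≤ Real.log (1 + C) * (2 + C) := by
    have := (div_le_iff₀ (by linarith : (0:ℝ) < 2 + C)).1 hlog
    linarith
  nlinarith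

lemma integral_min_eq (a K : ℝ) (ha : a < 0) (hK : 0 < K) :
    (∫ v in (0:ℝ)..1, rA a (min K (ccA a K * v))) = PhiA a K := by
  set C := ccA a K with hCdef
  have hC : 0 < C := ccA_pos' a ha hK
  set μ := min K C with hμdef
  have hμ0 : 0 ≤ μ := le_min hK.le hC.le
  set v₀ := μ / C with hv₀def
  have hv₀0 : 0 ≤ v₀ := by positivity
  have hv₀1 : v₀ ≤ 1 := by
    rw [hv₀def, div_le_one hC]; exact min_le_right _ _
  have hCv₀ : C * v₀ = μ := by rw [hv₀def]; field_simp
  have hint1 : IntervalIntegrable (fun v => rA a (min K (C * v))) volume 0 v₀ :=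
    (cont_min a K C hK hC (by rw [uIcc_of_le hv₀0]; exact fun u hu => hu.1)).intervalIntegrable
  have hint2 : IntervalIntegrable (fun v => rA a (min K (C * v))) volume v₀ 1 :=
    (cont_min a K C hK hC (by rw [uIcc_of_le hv₀1]; exact fun u hu => le_trans hv₀0 hu.1)).intervalIntegrable
  rw [← integral_add_adjacent_intervals hint1 hint2]
  have hpiece1 : (∫ v in (0:ℝ)..v₀, rA a (min K (C * v))) = psiA a μ / C := by
    have hEq : EqOn (fun v => rA a (min K (C * v))) (fun v => rA a (C * v)) (uIcc 0 v₀) := by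
      intro v hv
      rw [uIcc_of_le hv₀0] at hv
      have : C * v ≤ K := by
        calc C * v ≤ C * v₀ := by nlinarith [hv.2, hC]
        _ = μ := hCv₀
        _ ≤ K := min_le_left _ _
      simp only [min_eq_right this]
    rw [integral_congr hEq, integral_rA_comp a C v₀ hC hv₀0, hCv₀]
  have hpiece2 : (∫ v in v₀..1, rA a (min K (C * v))) = (1 - μ / C) * rA a μ := by
    by_cases hKC : K < C
    · have hμK : μ = K := min_eq_left hKC.le
      have hEq : EqOn (fun v => rA a (min K (C * v))) (fun _ => rA a K) (uIcc v₀ 1) := by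
        intro v hv
        rw [uIcc_of_le hv₀1] at hv
        have : K ≤ C * v := by
          calc K = C * v₀ := by rw [hCv₀, hμK]
          _ ≤ C * v := by nlinarith [hv.1, hC]
        simp only [min_eq_left this]
      rw [integral_congr hEq, intervalIntegral.integral_const, smul_eq_mul, hμK, hv₀def, hμK]
    · push_neg at hKC
      have hμC : μ = C := min_eq_right hKC
      have hv₀eq : v₀ = 1 := by rw [hv₀def, hμC]; field_simp
      rw [hv₀eq, integral_same, hμdef, min_eq_right hKC]
      field_simp
      ring
  rw [hpiece1, hpiece2]
  rfl

lemma integral_min_ge (a K : ℝ) (ha : a < 0) (hK : 0 < K) :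
    rA a (ccA a K / 2) ≤ ∫ v in (0:ℝ)..1, rA a (min K (ccA a K * v)) := by
  set C := ccA a K with hCdef
  have hC : 0 < C := ccA_pos' a ha hK
  have step1 : (∫ v in (0:ℝ)..1, rA a (C * v)) ≤ ∫ v in (0:ℝ)..1, rA a (min K (C * v)) := by
    apply integral_mono_on (by norm_num)
    · apply ContinuousOn.intervalIntegrable
      intro v hv
      rw [uIcc_of_le (by norm_num : (0:ℝ) ≤ 1)] at hv
      have : 0 < 1 + C * v := by nlinarith [hv.1]
      unfold rA
      exact ((continuousAt_const.mul (continuousAt_const.mul continuousAt_id)).div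
        (continuousAt_const.add (continuousAt_const.mul continuousAt_id))
        (ne_of_gt this)).continuousWithinAt
    · exact (cont_min a K C hK hC
        (by rw [uIcc_of_le (by norm_num : (0:ℝ) ≤ 1)]; exact fun u hu => hu.1)).intervalIntegrable
    · intro v hv
      exact rA_anti' a ha (le_min hK.le (mul_nonneg hC.le hv.1)) (min_le_right _ _)
  have step2 : rA a (C / 2) ≤ ∫ v in (0:ℝ)..1, rA a (C * v) := by
    rw [integral_rA_comp a C 1 hC (by norm_num), mul_one]
    have := psi_div_ge' a C ha hC
    unfold rA psiA at *
    convert this using 2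
  linarith [step1, step2]

lemma ccA_contAt (a M : ℝ) (hM : 0 < M) : ContinuousAt (ccA a) M := by
  unfold ccA
  exact ((continuousAt_const.mul continuousAt_id).div
    (continuousAt_const.add continuousAt_id) (by intro h; simp at h; linarith)).neg

lemma muA_contAt (a M : ℝ) (hM : 0 < M) : ContinuousAt (muA a) M :=
  continuousAt_id.min (ccA_contAt a M hM)

lemma muA_pos (a M : ℝ) (ha : a < 0) (hM : 0 < M) : 0 < muA a M :=
  lt_min hM (ccA_pos' a ha hM)

lemma PhiA_contAt (a M : ℝ) (ha : a < 0) (hM : 0 < M) : ContinuousAt (PhiA a) M := by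
  have hmu := muA_contAt a M hM
  have hcc := ccA_contAt a M hM
  have hccne : ccA a M ≠ 0 := ne_of_gt (ccA_pos' a ha hM)
  have hmupos := muA_pos a M ha hM
  have hlogarg : (1 : ℝ) + muA a M ≠ 0 := by intro h; linarith
  have hpsi : ContinuousAt (fun K => psiA a (muA a K)) M := by
    unfold psiA
    have hin : ContinuousAt (fun K => (1:ℝ) + muA a K) M := continuousAt_const.add hmu
    have hlogc : ContinuousAt (fun K => Real.log (1 + muA a K)) M :=
      ContinuousAt.comp (g := Real.log) (f := fun K => (1:ℝ) + muA a K) (x := M)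
        (Real.continuousAt_log hlogarg) hin
    exact continuousAt_const.mul (hmu.sub hlogc)
  have hrmu : ContinuousAt (fun K => rA a (muA a K)) M := by
    unfold rA
    apply ContinuousAt.div
    · exact continuousAt_const.mul hmu
    · exact continuousAt_const.add hmu
    · exact hlogarg
  unfold PhiA
  exact (hpsi.div hcc hccne).add
    ((continuousAt_const.sub (hmu.div hcc hccne)).mul hrmu)

lemma rhalf_contAt (a M : ℝ) (ha : a < 0) (hM : 0 < M) :
    ContinuousAt (fun K => rA a (ccA a K / 2)) M := by
  have hcc := ccA_contAt a M hM
  have h2 : (0:ℝ) < ccA a M / 2 := by have := ccA_pos' a ha hM; linarith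
  unfold rA
  exact (continuousAt_const.mul (hcc.div_const 2)).div
    (continuousAt_const.add (hcc.div_const 2)) (by intro h; linarith)

lemma integral_rA0 (a w : ℝ) (hw : 0 ≤ w) : (∫ v in (0:ℝ)..w, rA a v) = psiA a w := by
  have h := integral_rA_comp a 1 w one_pos hw
  simpa using h

theorem liminf_lower_bounds
    (f : ℝ → (ℝ → ℝ) → ℝ) (θ : ℝ → ℝ) (a : ℝ) (ha : a < 0)
    (h1 : HypH1 f θ) (h2 : HypH2 f a 1) (h3 : HypH3 f)
    (r A B D : ℝ → ℝ)
    (hr : ∀ x : ℝ, r x = a * x / (1 + x))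
    (hA : ∀ x : ℝ, x ≠ 0 → A x = x + r x + (1 / r x) * ∫ t in x..(0 : ℝ), r t)
    (hA0 : A 0 = 0)
    (hB : ∀ x : ℝ, x ≠ 0 → B x = (1 / r x) * ∫ s in (-(r x))..(0 : ℝ), r s)
    (hB0 : B 0 = 0)
    (hD : ∀ x : ℝ, D x = if r x < -x then A x else B x)
    (α : ℝ) (x : ℝ → ℝ) (hx : IsGlobalSol f α x)
    (hxbdd₁ : IsBoundedUnder (· ≤ ·) atTop x)
    (hxbdd₂ : IsBoundedUnder (· ≥ ·) atTop x)
    (m M : ℝ) (hm : m = liminf x atTop) (hM : M = limsup x atTop)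
    (hm0 : m < 0) (hM0 : 0 < M) :
    D M ≤ m ∧ r (-(r M) / 2) ≤ m :=
  by
  have hMK : ∀ K, M < K → (∫ v in (0:ℝ)..1, rA a (min K (ccA a K * v))) ≤ m :=
    fun K hK => key_bound f a ha h2 α x hx hxbdd₁ hxbdd₂ m M hm hM hm0 hM0 K hK
  have hPhi_le : ∀ K, M < K → PhiA a K ≤ m := by
    intro K hK
    rw [← integral_min_eq a K ha (hM0.trans hK)]
    exact hMK K hK
  have hrr_le : ∀ K, M < K → rA a (ccA a K / 2) ≤ m := fun K hK =>
    le_trans (integral_min_ge a K ha (hM0.trans hK)) (hMK K hK)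
  have hPhiM : PhiA a M ≤ m := by
    have htend : Tendsto (PhiA a) (𝓝[>] M) (𝓝 (PhiA a M)) :=
      (PhiA_contAt a M ha hM0).tendsto.mono_left nhdsWithin_le_nhds
    apply le_of_tendsto htend
    filter_upwards [self_mem_nhdsWithin] with K hK
    exact hPhi_le K hK
  have hrrM : rA a (ccA a M / 2) ≤ m := by
    have htend : Tendsto (fun K => rA a (ccA a K / 2)) (𝓝[>] M) (𝓝 (rA a (ccA a M / 2))) :=
      (rhalf_contAt a M ha hM0).tendsto.mono_left nhdsWithin_le_nhds
    apply le_of_tendsto htend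
    filter_upwards [self_mem_nhdsWithin] with K hK
    exact hrr_le K hK
  have hMne : M ≠ 0 := ne_of_gt hM0
  have hrM : r M = rA a M := by rw [hr]; rfl
  have hccM : ccA a M = -(r M) := by rw [hr]; rfl
  have hcc_pos : 0 < ccA a M := ccA_pos' a ha hM0
  have hrMneg : r M < 0 := by
    have : 0 < -(r M) := by rw [← hccM]; exact hcc_pos
    linarith
  have hrMne : r M ≠ 0 := ne_of_lt hrMneg
  have hccne : ccA a M ≠ 0 := ne_of_gt hcc_pos
  constructor
  · -- D M ≤ m
    have hDPhi : D M = PhiA a M := by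
      rw [hD]
      by_cases hcase : r M < -M
      · rw [if_pos hcase, hA M hMne]
        have hMcc : M ≤ ccA a M := by rw [hccM]; linarith
        have hmuM : muA a M = M := min_eq_left hMcc
        have hint : (∫ t in M..(0:ℝ), r t) = -(psiA a M) := by
          rw [intervalIntegral.integral_symm,
            integral_congr (g := fun t => rA a t) (fun t _ => hr t),
            integral_rA0 a M hM0.le]
        rw [hint]
        unfold PhiA
        rw [hmuM, hccM, ← hrM]
        field_simp [hrMne]
        ring
      · rw [if_neg hcase, hB M hMne]
        push_neg at hcase
        have hccM_le : ccA a M ≤ M := by rw [hccM]; linarith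
        have hmu : muA a M = ccA a M := min_eq_right hccM_le
        have hint : (∫ s in (-(r M))..(0:ℝ), r s) = -(psiA a (ccA a M)) := by
          rw [intervalIntegral.integral_symm,
            integral_congr (g := fun t => rA a t) (fun t _ => hr t),
            ← hccM, integral_rA0 a _ hcc_pos.le]
        rw [hint]
        unfold PhiA
        rw [hmu, hccM]
        field_simp [hrMne]
        ring
    rw [hDPhi]
    exact hPhiM
  · -- r (-(r M) / 2) ≤ m
    have := hrrM
    rw [hccM] at this
    rw [hr]
    unfold rA at this
    exact this
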